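/- Let n ≥ 5 and let p(s) = s^n + α1·s^{n-1} + ... + αn be a monic real polynomial, with the convention αk = 0 for k > n. If α2² - 4·α4 ≤ 0 and α7 - α1·α6 ≥ 0, then p is Hurwitz unstable, i.e., p has a complex root with nonnegative real part. -/

import Mathlib

open Polynomial

noncomputable def aa (Q : Polynomial ℝ) (k : ℕ) : ℝ :=
  if k ≤ Q.natDegree then Q.coeff (Q.natDegree - k) else 0

lemma aa_of_le {Q : Polynomial ℝ} {k : ℕ} (h : k ≤ Q.natDegree) :
    aa Q k = Q.coeff (Q.natDegree - k) := if_pos h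

lemma aa_of_gt {Q : Polynomial ℝ} {k : ℕ} (h : Q.natDegree < k) : aa Q k = 0 :=
  if_neg (by omega)

lemma aa_zero {Q : Polynomial ℝ} (h : Q.Monic) : aa Q 0 = 1 := by
  rw [aa_of_le (Nat.zero_le _), Nat.sub_zero]; exact h

lemma coeff_mul_lin (Q : Polynomial ℝ) (l : ℝ) (m : ℕ) :
    (Q * (X + C l)).coeff m = (if 1 ≤ m then Q.coeff (m-1) else 0) + l * Q.coeff m := by
  have h : Q * (X + C l) = Q * X ^ 1 + Q * C l := by ring
  rw [h, coeff_add, coeff_mul_X_pow', coeff_mul_C]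
  ring

lemma coeff_mul_quad (Q : Polynomial ℝ) (b c : ℝ) (m : ℕ) :
    (Q * (X^2 + (C b * X + C c))).coeff m =
      (if 2 ≤ m then Q.coeff (m-2) else 0) + b * (if 1 ≤ m then Q.coeff (m-1) else 0)
        + c * Q.coeff m := by
  have h : Q * (X^2 + (C b * X + C c)) = Q * X ^ 2 + ((Q * C b) * X ^ 1 + Q * C c) := by ring
  rw [h, coeff_add, coeff_add, coeff_mul_X_pow', coeff_mul_X_pow', coeff_mul_C, coeff_mul_C]
  split_ifs <;> ring

lemma monic_quad (b c : ℝ) : (X^2 + (C b * X + C c)).Monic :=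
  Polynomial.monic_X_pow_add (lt_of_le_of_lt degree_linear_le (by norm_num))

lemma natDegree_quad (b c : ℝ) : (X^2 + (C b * X + C c)).natDegree = 2 := by
  have h : (X:Polynomial ℝ)^2 + (C b * X + C c) = C 1 * X^2 + C b * X + C c := by
    simp [add_assoc]
  rw [h, natDegree_quadratic one_ne_zero]

lemma natDeg_mul_lin {Q : Polynomial ℝ} (hQ : Q.Monic) (l : ℝ) :
    (Q * (X + C l)).natDegree = Q.natDegree + 1 := by
  rw [hQ.natDegree_mul (monic_X_add_C l), natDegree_X_add_C]

lemma natDeg_mul_quad {Q : Polynomial ℝ} (hQ : Q.Monic) (b c : ℝ) :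
    (Q * (X^2 + (C b * X + C c))).natDegree = Q.natDegree + 2 := by
  rw [hQ.natDegree_mul (monic_quad b c), natDegree_quad]

lemma aa_mul_lin {Q : Polynomial ℝ} (hQ : Q.Monic) (l : ℝ) (k : ℕ) :
    aa (Q * (X + C l)) (k+1) = aa Q (k+1) + l * aa Q k := by
  set d := Q.natDegree with hd
  by_cases h : k + 1 ≤ d + 1
  · rw [aa, natDeg_mul_lin hQ, ← hd, if_pos h, coeff_mul_lin]
    rw [show d + 1 - (k+1) = d - k from by omega]
    by_cases hk : k < d
    · rw [if_pos (by omega : 1 ≤ d - k), aa_of_le (by omega : k + 1 ≤ d),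
        aa_of_le (by omega : k ≤ d), ← hd,
        show d - k - 1 = d - (k+1) from by omega]
    · rw [if_neg (by omega), aa_of_gt (by omega : d < k + 1), aa_of_le (by omega : k ≤ d), ← hd]
  · rw [aa_of_gt (by rw [natDeg_mul_lin hQ]; omega), aa_of_gt (by omega : d < k + 1),
      aa_of_gt (by omega : d < k)]
    ring

lemma aa_mul_quad {Q : Polynomial ℝ} (hQ : Q.Monic) (b c : ℝ) (k : ℕ) :
    aa (Q * (X^2 + (C b * X + C c))) (k+2) = aa Q (k+2) + b * aa Q (k+1) + c * aa Q k := by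
  set d := Q.natDegree with hd
  by_cases h : k + 2 ≤ d + 2
  · rw [aa, natDeg_mul_quad hQ, ← hd, if_pos h, coeff_mul_quad]
    rw [show d + 2 - (k+2) = d - k from by omega]
    rcases lt_trichotomy k d with hk | hk | hk
    · by_cases hk1 : k + 1 < d
      · rw [if_pos (by omega : 2 ≤ d - k), if_pos (by omega : 1 ≤ d - k),
          aa_of_le (by omega : k + 2 ≤ d), aa_of_le (by omega : k + 1 ≤ d),
          aa_of_le (by omega : k ≤ d), ← hd,
          show d - k - 2 = d - (k+2) from by omega,
          show d - k - 1 = d - (k+1) from by omega]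
      · -- d = k + 1
        rw [if_neg (by omega), if_pos (by omega : 1 ≤ d - k),
          aa_of_gt (by omega : d < k + 2), aa_of_le (by omega : k + 1 ≤ d),
          aa_of_le (by omega : k ≤ d), ← hd,
          show d - k - 1 = d - (k+1) from by omega]
    · rw [if_neg (by omega), if_neg (by omega), aa_of_gt (by omega : d < k + 2),
        aa_of_gt (by omega : d < k + 1), aa_of_le (by omega : k ≤ d), ← hd]
    · omega
  · rw [aa_of_gt (by rw [natDeg_mul_quad hQ]; omega), aa_of_gt (by omega : d < k + 2),
      aa_of_gt (by omega : d < k + 1), aa_of_gt (by omega : d < k)]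
    ring

lemma aa_mul_quad_one {Q : Polynomial ℝ} (hQ : Q.Monic) (b c : ℝ) :
    aa (Q * (X^2 + (C b * X + C c))) 1 = aa Q 1 + b := by
  rw [aa, natDeg_mul_quad hQ, if_pos (by omega), coeff_mul_quad]
  set d := Q.natDegree with hd
  by_cases hd0 : d = 0
  · have hco : Q.coeff d = 1 := by rw [hd]; exact hQ.coeff_natDegree
    have hc1 : Q.coeff 1 = 0 := by
      rw [show (1:ℕ) = Q.natDegree + 1 from by omega]; exact coeff_natDegree_succ_eq_zero
    rw [show d + 2 - 1 = 1 from by omega, if_neg (by omega), if_pos le_rfl,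
      aa_of_gt (by omega : d < 1), show (1:ℕ) - 1 = d from by omega, hco, hc1]
    ring
  · rw [if_pos (by omega : 2 ≤ d + 2 - 1), if_pos (by omega : 1 ≤ d + 2 - 1),
      aa_of_le (by omega : 1 ≤ d), ← hd,
      show d + 2 - 1 - 2 = d - 1 from by omega,
      show d + 2 - 1 - 1 = d from by omega,
      show d + 2 - 1 = d + 1 from by omega]
    have hco : Q.coeff Q.natDegree = 1 := hQ.coeff_natDegree
    have hc1 : Q.coeff (Q.natDegree + 1) = 0 := coeff_natDegree_succ_eq_zero
    rw [hd, hco, hc1]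
    ring
def Stb (Q : Polynomial ℝ) : Prop :=
  Q.Monic ∧ (∀ k, 0 ≤ aa Q k) ∧ (∀ k ≤ Q.natDegree, 0 < aa Q k) ∧
    (∀ k, 1 ≤ k → 2*k ≤ Q.natDegree → 0 < aa Q 1 * aa Q (2*k) - aa Q (2*k+1))

lemma Stb.monic {Q : Polynomial ℝ} (h : Stb Q) : Q.Monic := h.1
lemma Stb.nonneg {Q : Polynomial ℝ} (h : Stb Q) : ∀ k, 0 ≤ aa Q k := h.2.1
lemma Stb.pos {Q : Polynomial ℝ} (h : Stb Q) : ∀ k ≤ Q.natDegree, 0 < aa Q k := h.2.2.1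
lemma Stb.Dpos {Q : Polynomial ℝ} (h : Stb Q) :
    ∀ k, 1 ≤ k → 2*k ≤ Q.natDegree → 0 < aa Q 1 * aa Q (2*k) - aa Q (2*k+1) := h.2.2.2

lemma Stb.Dnonneg {Q : Polynomial ℝ} (h : Stb Q) (k : ℕ) (hk : 1 ≤ k) :
    0 ≤ aa Q 1 * aa Q (2*k) - aa Q (2*k+1) := by
  by_cases h2 : 2*k ≤ Q.natDegree
  · exact (h.Dpos k hk h2).le
  · rw [aa_of_gt (show Q.natDegree < 2*k+1 by omega)]
    have := mul_nonneg (h.nonneg 1) (h.nonneg (2*k)); linarith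

lemma Stb_one : Stb 1 := by
  refine ⟨monic_one, ?_, ?_, ?_⟩
  · intro k
    rcases Nat.eq_zero_or_pos k with rfl | hk
    · rw [aa_zero monic_one]; norm_num
    · rw [aa_of_gt (by simpa using hk)]
  · intro k hk
    simp only [natDegree_one, Nat.le_zero] at hk
    subst hk; rw [aa_zero monic_one]; norm_num
  · intro k hk h2; simp only [natDegree_one] at h2; omega

lemma Stb_mul_lin {Q : Polynomial ℝ} (h : Stb Q) {l : ℝ} (hl : 0 < l) :
    Stb (Q * (X + C l)) := by
  have hm : (Q * (X + C l)).Monic := h.monic.mul (monic_X_add_C l)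
  have hdeg : (Q * (X + C l)).natDegree = Q.natDegree + 1 := natDeg_mul_lin h.monic l
  refine ⟨hm, ?_, ?_, ?_⟩
  · intro k
    rcases k with _ | j
    · rw [aa_zero hm]; norm_num
    · rw [aa_mul_lin h.monic]
      exact add_nonneg (h.nonneg _) (mul_nonneg hl.le (h.nonneg _))
  · intro k hk
    rcases k with _ | j
    · rw [aa_zero hm]; norm_num
    · rw [aa_mul_lin h.monic]
      rw [hdeg] at hk
      have h1 := h.pos j (by omega)
      have h2 := h.nonneg (j+1)
      nlinarith
  · intro k hk h2
    rw [hdeg] at h2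
    obtain ⟨m, hm2⟩ : ∃ m, 2*k = m + 1 := ⟨2*k - 1, by omega⟩
    have hD := h.Dnonneg k hk
    have hDs := h.Dpos k hk
    rw [hm2] at hD hDs h2 ⊢
    rw [aa_mul_lin h.monic, aa_mul_lin h.monic, aa_mul_lin h.monic, aa_zero h.monic]
    by_cases hle : m + 1 ≤ Q.natDegree
    · have hDs' := hDs (by omega)
      nlinarith [mul_nonneg (mul_nonneg hl.le (h.nonneg 1)) (h.nonneg m),
        mul_nonneg (mul_nonneg hl.le hl.le) (h.nonneg m)]
    · rw [aa_of_gt (show Q.natDegree < m + 1 by omega),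
        aa_of_gt (show Q.natDegree < m + 1 + 1 by omega)]
      have hp := h.pos m (by omega)
      have h1 := h.nonneg 1
      nlinarith [mul_pos hl hp]

lemma Stb_mul_quad {Q : Polynomial ℝ} (h : Stb Q) {b c : ℝ} (hb : 0 < b) (hc : 0 < c) :
    Stb (Q * (X^2 + (C b * X + C c))) := by
  have hm : (Q * (X^2 + (C b * X + C c))).Monic := h.monic.mul (monic_quad b c)
  have hdeg : (Q * (X^2 + (C b * X + C c))).natDegree = Q.natDegree + 2 :=
    natDeg_mul_quad h.monic b c
  refine ⟨hm, ?_, ?_, ?_⟩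
  · intro k
    match k with
    | 0 => rw [aa_zero hm]; norm_num
    | 1 =>
      rw [aa_mul_quad_one h.monic]
      have := h.nonneg 1; linarith
    | (j+2) =>
      rw [aa_mul_quad h.monic]
      have := h.nonneg j; have := h.nonneg (j+1); have := h.nonneg (j+2)
      nlinarith
  · intro k hk
    rw [hdeg] at hk
    match k, hk with
    | 0, _ => rw [aa_zero hm]; norm_num
    | 1, _ =>
      rw [aa_mul_quad_one h.monic]
      have := h.nonneg 1; linarith
    | (j+2), hk =>
      rw [aa_mul_quad h.monic]
      have h0 := h.pos j (by omega)
      have h1 := h.nonneg (j+1); have h2 := h.nonneg (j+2)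
      nlinarith
  · intro k hk h2
    rw [hdeg] at h2
    match k, hk, h2 with
    | 1, _, h2 =>
      rw [show 2*1 = 0 + 2 from rfl, show 0+2+1 = 1+2 from rfl,
        aa_mul_quad h.monic, aa_mul_quad h.monic, aa_mul_quad_one h.monic, aa_zero h.monic]
      have hD := h.Dnonneg 1 le_rfl
      rw [show 2*1 = 2 from rfl] at hD
      have h1 := h.nonneg 1
      have h2' := h.nonneg 2
      have h3 := h.nonneg 3
      nlinarith [mul_pos hb hc, mul_nonneg (mul_nonneg hb.le hb.le) (h.nonneg 1),
        mul_nonneg (mul_nonneg hb.le (h.nonneg 1)) (h.nonneg 1)]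
    | (j+2), _, h2 =>
      have e1 : 2*(j+2) = (2*j+2) + 2 := by ring
      have e2 : 2*j+2+2+1 = (2*j+3) + 2 := by omega
      rw [e1, e2, aa_mul_quad h.monic, aa_mul_quad h.monic, aa_mul_quad_one h.monic]
      have hDj : 0 < aa Q 1 * aa Q (2*(j+1)) - aa Q (2*(j+1)+1) :=
        h.Dpos (j+1) (by omega) (by omega)
      have hDk : 0 ≤ aa Q 1 * aa Q (2*(j+2)) - aa Q (2*(j+2)+1) :=
        h.Dnonneg (j+2) (by omega)
      rw [show 2*(j+1) = 2*j+2 from by ring, show 2*j+2+1 = 2*j+3 from rfl] at hDj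
      rw [e1, e2] at hDk
      have n1 := h.nonneg 1
      have n2 := h.nonneg (2*j+2)
      have n3 := h.nonneg (2*j+3)
      have n4 := h.nonneg (2*j+2+2)
      nlinarith [mul_pos hc hDj, mul_nonneg (mul_nonneg hb.le n1) n3,
        mul_nonneg (mul_nonneg hb.le hb.le) n3, mul_nonneg (mul_nonneg hb.le hc.le) n2]
lemma Stb_qprod (qs : List (ℝ × ℝ)) (hqs : ∀ p ∈ qs, 0 < p.1 ∧ 0 < p.2) :
    Stb ((qs.map fun p => X^2 + (C p.1 * X + C p.2)).prod) := by
  induction qs with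
  | nil => simpa using Stb_one
  | cons q qs ih =>
    simp only [List.map_cons, List.prod_cons]
    rw [mul_comm]
    exact Stb_mul_quad (ih fun p hp => hqs p (List.mem_cons_of_mem _ hp))
      (hqs q (List.mem_cons_self)).1 (hqs q (List.mem_cons_self)).2

lemma Stb_prod (ls : List ℝ) (qs : List (ℝ × ℝ)) (hls : ∀ l ∈ ls, 0 < l)
    (hqs : ∀ p ∈ qs, 0 < p.1 ∧ 0 < p.2) :
    Stb ((ls.map fun l => X + C l).prod * (qs.map fun p => X^2 + (C p.1 * X + C p.2)).prod) := by
  induction ls with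
  | nil => rw [List.map_nil, List.prod_nil, one_mul]; exact Stb_qprod qs hqs
  | cons l ls ih =>
    simp only [List.map_cons, List.prod_cons]
    rw [mul_assoc, mul_comm]
    exact Stb_mul_lin (ih fun x hx => hls x (List.mem_cons_of_mem _ hx))
      (hls l (List.mem_cons_self))

lemma monic_lprod (ls : List ℝ) : ((ls.map fun l => X + C l).prod : Polynomial ℝ).Monic := by
  induction ls with
  | nil => simpa using monic_one
  | cons l ls ih =>
    simp only [List.map_cons, List.prod_cons]
    exact (monic_X_add_C l).mul ih

lemma monic_qprod (qs : List (ℝ × ℝ)) :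
    ((qs.map fun p => X^2 + (C p.1 * X + C p.2)).prod : Polynomial ℝ).Monic := by
  induction qs with
  | nil => simpa using monic_one
  | cons q qs ih =>
    simp only [List.map_cons, List.prod_cons]
    exact (monic_quad q.1 q.2).mul ih

lemma deg_lprod (ls : List ℝ) :
    ((ls.map fun l => X + C l).prod : Polynomial ℝ).natDegree = ls.length := by
  induction ls with
  | nil => simp
  | cons l ls ih =>
    simp only [List.map_cons, List.prod_cons, List.length_cons]
    rw [(monic_X_add_C l).natDegree_mul (monic_lprod ls), natDegree_X_add_C, ih]
    omega

lemma deg_qprod (qs : List (ℝ × ℝ)) :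
    ((qs.map fun p => X^2 + (C p.1 * X + C p.2)).prod : Polynomial ℝ).natDegree
      = 2 * qs.length := by
  induction qs with
  | nil => simp
  | cons q qs ih =>
    simp only [List.map_cons, List.prod_cons, List.length_cons]
    rw [(monic_quad q.1 q.2).natDegree_mul (monic_qprod qs), natDegree_quad, ih]
    omega

lemma exists_fact : ∀ (N : ℕ) (P : Polynomial ℝ), P.natDegree = N → P.Monic →
    (∀ z : ℂ, eval z (P.map (algebraMap ℝ ℂ)) = 0 → z.re < 0) →
    ∃ (ls : List ℝ) (qs : List (ℝ × ℝ)), (∀ l ∈ ls, 0 < l) ∧ (∀ p ∈ qs, 0 < p.1 ∧ 0 < p.2) ∧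
      P = (ls.map fun l => X + C l).prod * (qs.map fun p => X^2 + (C p.1 * X + C p.2)).prod := by
  intro N
  induction N using Nat.strong_induction_on with
  | _ N ih =>
    intro P hdeg hmon hroots
    rcases Nat.eq_zero_or_pos N with rfl | hN
    · have hP1 : P = 1 := hmon.natDegree_eq_zero.mp hdeg
      exact ⟨[], [], by simp, by simp, by simp [hP1]⟩
    have hdegC : 0 < (P.map (algebraMap ℝ ℂ)).degree := by
      rw [hmon.degree_map, degree_eq_natDegree hmon.ne_zero, hdeg]
      exact_mod_cast hN
    obtain ⟨z, hz⟩ := Complex.exists_root hdegC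
    have hzre : z.re < 0 := hroots z hz
    by_cases him : z.im = 0
    · -- real root
      have hzx : (algebraMap ℝ ℂ) z.re = z := by
        apply Complex.ext <;> simp [him]
      have hPx : P.eval z.re = 0 := by
        have h1 : eval ((algebraMap ℝ ℂ) z.re) (P.map (algebraMap ℝ ℂ)) = 0 := by
          rw [hzx]; exact hz
        rw [eval_map, eval₂_at_apply] at h1
        exact (map_eq_zero_iff _ (algebraMap ℝ ℂ).injective).mp h1
      obtain ⟨Q, hQ⟩ := dvd_iff_isRoot.mpr hPx
      have hQm : Q.Monic := (monic_X_sub_C z.re).of_mul_monic_left (hQ ▸ hmon)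
      have hQdeg : Q.natDegree = N - 1 := by
        have h2 := (monic_X_sub_C z.re).natDegree_mul hQm
        rw [← hQ, hdeg, natDegree_X_sub_C] at h2
        omega
      have hQroots : ∀ w : ℂ, eval w (Q.map (algebraMap ℝ ℂ)) = 0 → w.re < 0 := by
        intro w hw
        apply hroots w
        rw [hQ, Polynomial.map_mul, eval_mul, hw, mul_zero]
      obtain ⟨ls, qs, h1, h2, h3⟩ := ih (N-1) (by omega) Q hQdeg hQm hQroots
      refine ⟨-z.re :: ls, qs, ?_, h2, ?_⟩
      · intro l hl
        rcases List.mem_cons.mp hl with rfl | hl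
        · linarith
        · exact h1 l hl
      · rw [hQ, h3]
        simp only [List.map_cons, List.prod_cons, map_neg]
        ring
    · -- complex conjugate pair
      have hconj : eval ((starRingEnd ℂ) z) (P.map (algebraMap ℝ ℂ)) = 0 := by
        have hmapc : (P.map (algebraMap ℝ ℂ)).map (starRingEnd ℂ) = P.map (algebraMap ℝ ℂ) := by
          rw [Polynomial.map_map]
          congr 1
          exact RingHom.ext fun r => by simp
        calc eval ((starRingEnd ℂ) z) (P.map (algebraMap ℝ ℂ))
            = eval ((starRingEnd ℂ) z) ((P.map (algebraMap ℝ ℂ)).map (starRingEnd ℂ)) := by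
              rw [hmapc]
          _ = (starRingEnd ℂ) (eval z (P.map (algebraMap ℝ ℂ))) := by
              rw [eval_map, eval₂_at_apply]
          _ = 0 := by rw [show eval z (P.map (algebraMap ℝ ℂ)) = 0 from hz, map_zero]
      have hzne : z ≠ (starRingEnd ℂ) z := by
        intro hh
        apply him
        have h4 := congrArg Complex.im hh
        simp only [Complex.conj_im] at h4
        linarith
      have hbpos : (0:ℝ) < -(2*z.re) := by linarith
      have hcpos : 0 < Complex.normSq z := by
        apply Complex.normSq_pos.mpr
        intro h0
        rw [h0] at hzre
        simp at hzre
      have hqmap : (X^2 + (C (-(2*z.re)) * X + C (Complex.normSq z))).map (algebraMap ℝ ℂ)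
          = (X - C z) * (X - C ((starRingEnd ℂ) z)) := by
        simp only [Polynomial.map_add, Polynomial.map_pow, Polynomial.map_mul, map_X, map_C]
        have hbz : ((algebraMap ℝ ℂ) (-(2*z.re))) = -(z + (starRingEnd ℂ) z) := by
          have e0 : ((algebraMap ℝ ℂ) (-(2*z.re))) = ((-(2*z.re) : ℝ) : ℂ) := rfl
          rw [e0, Complex.add_conj]
          push_cast
          ring
        have hcz : ((algebraMap ℝ ℂ) (Complex.normSq z)) = z * (starRingEnd ℂ) z :=
          (Complex.mul_conj z).symm
        rw [hbz, hcz]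
        simp only [map_neg, map_add, map_mul]
        ring
      have hdvd : (X^2 + (C (-(2*z.re)) * X + C (Complex.normSq z))) ∣ P := by
        rw [← Polynomial.map_dvd_map (algebraMap ℝ ℂ) (algebraMap ℝ ℂ).injective
          (monic_quad _ _), hqmap]
        apply IsCoprime.mul_dvd
        · exact isCoprime_X_sub_C_of_isUnit_sub (sub_ne_zero.mpr hzne).isUnit
        · exact dvd_iff_isRoot.mpr hz
        · exact dvd_iff_isRoot.mpr hconj
      obtain ⟨Q, hQ⟩ := hdvd
      have hQm : Q.Monic := (monic_quad _ _).of_mul_monic_left (hQ ▸ hmon)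
      have hQdeg : Q.natDegree = N - 2 := by
        have h2 := (monic_quad (-(2*z.re)) (Complex.normSq z)).natDegree_mul hQm
        rw [← hQ, hdeg, natDegree_quad] at h2
        omega
      have hN2 : 2 ≤ N := by
        have h2 := (monic_quad (-(2*z.re)) (Complex.normSq z)).natDegree_mul hQm
        rw [← hQ, hdeg, natDegree_quad] at h2
        omega
      have hQroots : ∀ w : ℂ, eval w (Q.map (algebraMap ℝ ℂ)) = 0 → w.re < 0 := by
        intro w hw
        apply hroots w
        rw [hQ, Polynomial.map_mul, eval_mul, hw, mul_zero]
      obtain ⟨ls, qs, h1, h2, h3⟩ := ih (N-2) (by omega) Q hQdeg hQm hQroots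
      refine ⟨ls, (-(2*z.re), Complex.normSq z) :: qs, h1, ?_, ?_⟩
      · intro p hp
        rcases List.mem_cons.mp hp with rfl | hp
        · exact ⟨hbpos, hcpos⟩
        · exact h2 p hp
      · rw [hQ, h3]
        simp only [List.map_cons, List.prod_cons]
        ring
lemma p_deg (n : ℕ) (hn : 1 ≤ n) (α : ℕ → ℝ) :
    ((X:Polynomial ℝ)^n + ∑ i ∈ Finset.range n, C (α (i+1)) * X^(n-1-i)).Monic ∧
    ((X:Polynomial ℝ)^n + ∑ i ∈ Finset.range n, C (α (i+1)) * X^(n-1-i)).natDegree = n := by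
  have hds : (∑ i ∈ Finset.range n, C (α (i+1)) * X^(n-1-i) : Polynomial ℝ).degree
      < (n : WithBot ℕ) := by
    apply lt_of_le_of_lt (degree_sum_le _ _)
    rw [Finset.sup_lt_iff (by exact_mod_cast WithBot.bot_lt_coe n)]
    intro i hi
    apply lt_of_le_of_lt (degree_C_mul_X_pow_le _ _)
    exact_mod_cast (by omega : n - 1 - i < n)
  have hd : ((X:Polynomial ℝ)^n + ∑ i ∈ Finset.range n, C (α (i+1)) * X^(n-1-i)).degree
      = (n : WithBot ℕ) := by
    rw [degree_add_eq_left_of_degree_lt (by rwa [degree_X_pow]), degree_X_pow]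
  constructor
  · have hm : ((X:Polynomial ℝ)^n).Monic := monic_X_pow n
    have := hds
    rw [show (n : WithBot ℕ) = ((X:Polynomial ℝ)^n).degree from (degree_X_pow n).symm] at this
    exact hm.add_of_left this
  · exact natDegree_eq_of_degree_eq_some hd

lemma p_coeff (n k : ℕ) (α : ℕ → ℝ) (h1 : 1 ≤ k) (h2 : k ≤ n) :
    ((X:Polynomial ℝ)^n + ∑ i ∈ Finset.range n, C (α (i+1)) * X^(n-1-i)).coeff (n-k) = α k := by
  rw [coeff_add, coeff_X_pow, if_neg (by omega : ¬ n - k = n), finset_sum_coeff]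
  rw [Finset.sum_eq_single (k-1)]
  · rw [coeff_C_mul, coeff_X_pow, if_pos (by omega : n - k = n - 1 - (k-1)), mul_one,
      show k - 1 + 1 = k from by omega]
    ring
  · intro i hi hne
    rw [coeff_C_mul, coeff_X_pow, if_neg, mul_zero]
    rw [Finset.mem_range] at hi
    omega
  · intro h
    exact absurd (Finset.mem_range.mpr (by omega)) h

lemma quintic_key {b1 c1 b2 c2 l : ℝ} (hb1 : 0 < b1) (hc1 : 0 < c1) (hb2 : 0 < b2)
    (hc2 : 0 < c2) (hl : 0 < l) {p : Polynomial ℝ}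
    (hp : p = (X^2 + (C b1*X + C c1)) * ((X^2 + (C b2*X + C c2)) * (X + C l))) :
    0 < (p.coeff 3)^2 - 4 * p.coeff 1 := by
  have hexp : p = X^5 + C (b1+b2+l) * X^4 + C (c1+c2+b1*b2 + l*(b1+b2)) * X^3
      + C (b1*c2+b2*c1 + l*(c1+c2+b1*b2)) * X^2 + C (c1*c2 + l*(b1*c2+b2*c1)) * X
      + C (l*(c1*c2)) := by
    rw [hp]
    simp only [C_add, C_mul]
    ring
  have h3 : p.coeff 3 = c1+c2+b1*b2 + l*(b1+b2) := by
    rw [hexp]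
    simp only [coeff_add, coeff_C_mul, coeff_X_pow, coeff_C, coeff_X]
    norm_num
  have h1 : p.coeff 1 = c1*c2 + l*(b1*c2+b2*c1) := by
    rw [hexp]
    simp only [coeff_add, coeff_C_mul, coeff_X_pow, coeff_C, coeff_X]
    norm_num
  rw [h3, h1]
  nlinarith [sq_nonneg ((c1-c2) + l*(b1-b2)), mul_pos hb1 hb2, mul_pos hc1 hc2,
    mul_pos (mul_pos hb1 hb2) (mul_pos hc1 hc2), sq_nonneg (l*(b1+b2)),
    mul_pos (mul_pos hb1 hb2) hc1, mul_pos (mul_pos hb1 hb2) hc2,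
    mul_pos hl (mul_pos (mul_pos hb1 hb2) hb1), mul_pos hl (mul_pos (mul_pos hb1 hb2) hb2),
    sq_nonneg (b1*b2), mul_pos (mul_pos hl hl) (mul_pos hb1 hb2)]
theorem unstable_of_discr_ineq (n : ℕ) (hn : 5 ≤ n) (α : ℕ → ℝ)
    (hconv : ∀ k, n < k → α k = 0)
    (h24 : α 2 ^ 2 - 4 * α 4 ≤ 0) (h7 : 0 ≤ α 7 - α 1 * α 6) :
    ∃ z : ℂ, aeval z (X ^ n + ∑ i ∈ Finset.range n, C (α (i + 1)) * X ^ (n - 1 - i)) = 0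
      ∧ 0 ≤ z.re := by
  by_contra hcon
  push_neg at hcon
  set p : Polynomial ℝ := X ^ n + ∑ i ∈ Finset.range n, C (α (i + 1)) * X ^ (n - 1 - i) with hpdef
  obtain ⟨hmon, hdeg⟩ := p_deg n (by omega) α
  have hroots : ∀ z : ℂ, eval z (p.map (algebraMap ℝ ℂ)) = 0 → z.re < 0 := by
    intro z hz
    apply hcon z
    rw [aeval_def, ← eval_map]
    exact hz
  obtain ⟨ls, qs, hls, hqs, hfact⟩ := exists_fact n p hdeg hmon hroots
  have hlen : ls.length + 2 * qs.length = n := by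
    have h0 := congrArg Polynomial.natDegree hfact
    rw [hdeg, (monic_lprod ls).natDegree_mul (monic_qprod qs), deg_lprod, deg_qprod] at h0
    omega
  rcases eq_or_lt_of_le hn with heq | hgt
  · -- n = 5
    have hcof : p.coeff 3 = α 2 := by
      have h0 := p_coeff n 2 α (by omega) (by omega)
      rw [show n - 2 = 3 from by omega] at h0
      exact h0
    have hcof4 : p.coeff 1 = α 4 := by
      have h0 := p_coeff n 4 α (by omega) (by omega)
      rw [show n - 4 = 1 from by omega] at h0
      exact h0
    have hkey : 0 < (p.coeff 3)^2 - 4 * p.coeff 1 := by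
      rcases qs with _ | ⟨⟨b1, c1⟩, _ | ⟨⟨b2, c2⟩, _ | ⟨q3, qs⟩⟩⟩
      · -- five linear factors
        rcases ls with _ | ⟨l1, _ | ⟨l2, _ | ⟨l3, _ | ⟨l4, _ | ⟨l5, _ | ⟨l6, ls⟩⟩⟩⟩⟩⟩ <;>
          simp only [List.length_cons, List.length_nil] at hlen <;> try omega
        have p1 := hls l1 (by simp); have p2 := hls l2 (by simp)
        have p3 := hls l3 (by simp); have p4 := hls l4 (by simp)
        have p5 := hls l5 (by simp)
        apply quintic_key (by linarith : (0:ℝ) < l1 + l2) (mul_pos p1 p2)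
          (by linarith : (0:ℝ) < l3 + l4) (mul_pos p3 p4) p5
        rw [hfact]
        simp only [List.map_cons, List.prod_cons, List.map_nil, List.prod_nil, mul_one,
          C_add, C_mul]
        ring
      · -- one quadratic, three linear
        rcases ls with _ | ⟨l1, _ | ⟨l2, _ | ⟨l3, _ | ⟨l4, ls⟩⟩⟩⟩ <;>
          simp only [List.length_cons, List.length_nil] at hlen <;> try omega
        have p1 := hls l1 (by simp); have p2 := hls l2 (by simp)
        have p3 := hls l3 (by simp)
        have pb := hqs (b1, c1) (by simp)
        apply quintic_key pb.1 pb.2 (by linarith : (0:ℝ) < l1 + l2) (mul_pos p1 p2) p3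
        rw [hfact]
        simp only [List.map_cons, List.prod_cons, List.map_nil, List.prod_nil, mul_one,
          C_add, C_mul]
        ring
      · -- two quadratics, one linear
        rcases ls with _ | ⟨l1, _ | ⟨l2, ls⟩⟩ <;>
          simp only [List.length_cons, List.length_nil] at hlen <;> try omega
        have pb1 := hqs (b1, c1) (by simp)
        have pb2 := hqs (b2, c2) (by simp)
        have p1 := hls l1 (by simp)
        apply quintic_key pb1.1 pb1.2 pb2.1 pb2.2 p1
        rw [hfact]
        simp only [List.map_cons, List.prod_cons, List.map_nil, List.prod_nil, mul_one,
          C_add, C_mul]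
        ring
      · -- too many quadratics
        exfalso
        simp only [List.length_cons] at hlen
        omega
    rw [hcof, hcof4] at hkey
    linarith
  · -- n ≥ 6
    have hStb : Stb p := hfact ▸ Stb_prod ls qs hls hqs
    have haa : ∀ k, 1 ≤ k → aa p k = α k := by
      intro k hk
      by_cases hkn : k ≤ n
      · rw [aa_of_le (show k ≤ p.natDegree by rw [hdeg]; omega), hdeg]
        exact p_coeff n k α hk hkn
      · rw [aa_of_gt (show p.natDegree < k by rw [hdeg]; omega), hconv k (by omega)]
    have hD := hStb.Dpos 3 (by norm_num) (by rw [hdeg]; omega)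
    rw [show 2*3 = 6 from rfl, show (6:ℕ)+1 = 7 from rfl] at hD
    rw [haa 1 (by norm_num), haa 6 (by norm_num), haa 7 (by norm_num)] at hD
    linarith
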